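/- arXiv:2207.08694 — 7 statements merged into one kernel-verified Lean document; each statement's English description precedes it below -/
import Mathlib

section
/- Let N be a parallelizable smooth manifold of dimension n, let {X_1,...,X_n} be a global frame on N with associated teleparallel connection ∇, and let {θ^1,...,θ^n} be an almost dual basis of one-forms for {X_j}. Let G be a Riemannian metric on N, let Y_j be the G-gradient vector field of θ^j, and let ∇* be an affine connection that is G-dual to ∇. Then ∇*_{Y_j} Y_l = 0 for all j,l = 1,...,n; that is, the G-dual connection of ∇ is the teleparallel connection associated with the frame {Y_1,...,Y_n} of gradient vector fields. -/
open scoped Manifold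
local notation "∞" => (⊤ : ℕ∞)

noncomputable section

/-- Smooth vector fields on `N`, realized as derivations of the algebra of smooth
real-valued functions; this is the `C^∞(N)`-module `X(N)`. -/
abbrev VF {E : Type*} [NormedAddCommGroup E] [NormedSpace ℝ E] {H : Type*} [TopologicalSpace H]
    (I : ModelWithCorners ℝ E H) (N : Type*) [TopologicalSpace N] [ChartedSpace H N] :=
  Derivation ℝ C^∞⟮I, N; ℝ⟯ C^∞⟮I, N; ℝ⟯

/-- An affine connection on `N`: a map `∇ : X(N) × X(N) → X(N)` which is ℝ-bilinear,
`C^∞(N)`-linear in the first argument, and satisfies the Leibniz rule in the second. -/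
structure AffineConnection {E : Type*} [NormedAddCommGroup E] [NormedSpace ℝ E]
    {H : Type*} [TopologicalSpace H]
    (I : ModelWithCorners ℝ E H) (N : Type*) [TopologicalSpace N] [ChartedSpace H N] where
  cov : VF I N → VF I N → VF I N
  add_left : ∀ Z Z' W, cov (Z + Z') W = cov Z W + cov Z' W
  add_right : ∀ Z W W', cov Z (W + W') = cov Z W + cov Z W'
  rsmul_left : ∀ (c : ℝ) (Z W : VF I N), cov (c • Z) W = c • cov Z W
  rsmul_right : ∀ (c : ℝ) (Z W : VF I N), cov Z (c • W) = c • cov Z W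
  smul_left : ∀ (f : C^∞⟮I, N; ℝ⟯) (Z W : VF I N), cov (f • Z) W = f • cov Z W
  leibniz : ∀ (Z : VF I N) (f : C^∞⟮I, N; ℝ⟯) (W : VF I N),
    cov Z (f • W) = (Z f) • W + f • cov Z W

/-- A Riemannian metric on `N`: a symmetric, `C^∞(N)`-bilinear, pointwise nonnegative and
definite pairing of vector fields with values in smooth functions. -/
structure RiemannianMetric {E : Type*} [NormedAddCommGroup E] [NormedSpace ℝ E]
    {H : Type*} [TopologicalSpace H]
    (I : ModelWithCorners ℝ E H) (N : Type*) [TopologicalSpace N] [ChartedSpace H N] where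
  g : VF I N → VF I N → C^∞⟮I, N; ℝ⟯
  symm : ∀ Z W, g Z W = g W Z
  add_left : ∀ Z Z' W, g (Z + Z') W = g Z W + g Z' W
  smul_left : ∀ (f : C^∞⟮I, N; ℝ⟯) (Z W : VF I N), g (f • Z) W = f • g Z W
  nonneg : ∀ (Z : VF I N) (x : N), (0 : ℝ) ≤ g Z Z x
  definite : ∀ Z : VF I N, g Z Z = 0 → Z = 0

variable {E : Type*} [NormedAddCommGroup E] [NormedSpace ℝ E]
  {H : Type*} [TopologicalSpace H]


/-- `G.g · W` as a `C^∞(N)`-linear map. -/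
def gLin {E : Type*} [NormedAddCommGroup E] [NormedSpace ℝ E] {H : Type*} [TopologicalSpace H]
    {I : ModelWithCorners ℝ E H} {N : Type*} [TopologicalSpace N] [ChartedSpace H N]
    (G : RiemannianMetric I N) (W : VF I N) :
    VF I N →ₗ[C^∞⟮I, N; ℝ⟯] C^∞⟮I, N; ℝ⟯ where
  toFun Z := G.g Z W
  map_add' a b := G.add_left a b W
  map_smul' f a := G.smul_left f a W

/-- `D.cov · W` as a `C^∞(N)`-linear map. -/
def covLin {E : Type*} [NormedAddCommGroup E] [NormedSpace ℝ E] {H : Type*} [TopologicalSpace H]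
    {I : ModelWithCorners ℝ E H} {N : Type*} [TopologicalSpace N] [ChartedSpace H N]
    (D : AffineConnection I N) (W : VF I N) :
    VF I N →ₗ[C^∞⟮I, N; ℝ⟯] VF I N where
  toFun Z := D.cov Z W
  map_add' a b := D.add_left a b W
  map_smul' f a := D.smul_left f a W

/-- The `G`-dual connection `∇*` of the teleparallel connection `∇` of a global frame `{X_j}`
satisfies `∇*_{Y_j} Y_l = 0` for the `G`-gradient vector fields `Y_j` of an almost dual basis
of one-forms: i.e. `∇*` is the teleparallel connection of the gradient frame `{Y_j}`. -/
theorem dual_connection_is_teleparallel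
    (I : ModelWithCorners ℝ E H) (N : Type*) [TopologicalSpace N] [ChartedSpace H N]
    [IsManifold I ∞ N] [FiniteDimensional ℝ E] (n : ℕ)
    (hdim : Module.finrank ℝ E = n)
    (X : Module.Basis (Fin n) C^∞⟮I, N; ℝ⟯ (VF I N))
    (D : AffineConnection I N)
    (hD : ∀ j k : Fin n, D.cov (X j) (X k) = 0)
    (θ : Module.Basis (Fin n) C^∞⟮I, N; ℝ⟯ (VF I N →ₗ[C^∞⟮I, N; ℝ⟯] C^∞⟮I, N; ℝ⟯))
    (Cmat : Fin n → Fin n → ℝ)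
    (hθ : ∀ j k : Fin n, θ j (X k) = algebraMap ℝ C^∞⟮I, N; ℝ⟯ (Cmat j k))
    (G : RiemannianMetric I N)
    (Y : Fin n → VF I N)
    (hY : ∀ (k : Fin n) (Z : VF I N), θ k Z = G.g (Y k) Z)
    (D' : AffineConnection I N)
    (hdual : ∀ Z W V : VF I N,
      Z (G.g W V) = G.g (D.cov Z W) V + G.g W (D'.cov Z V)) :
    ∀ j l : Fin n, D'.cov (Y j) (Y l) = 0 := by
  intro j l
  have hcov0 : ∀ (k : Fin n) (Z : VF I N), D.cov Z (X k) = 0 := by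
    intro k Z
    have h0 : covLin D (X k) = 0 := Module.Basis.ext X fun i => by simpa [covLin] using hD i k
    simpa [covLin] using LinearMap.congr_fun h0 Z
  have hXV : ∀ k : Fin n, G.g (X k) (D'.cov (Y j) (Y l)) = 0 := by
    intro k
    have h1 := hdual (Y j) (X k) (Y l)
    have h2 : G.g (X k) (Y l) = algebraMap ℝ C^∞⟮I, N; ℝ⟯ (Cmat l k) := by
      rw [G.symm, ← hY l (X k), hθ l k]
    have h3 : (Y j) (G.g (X k) (Y l)) = 0 := by
      rw [h2]; exact Derivation.map_algebraMap _ _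
    have h4 : G.g (0 : VF I N) (Y l) = 0 := by
      simpa [gLin] using (gLin G (Y l)).map_zero
    rw [hcov0 k (Y j), h4, h3, zero_add] at h1
    exact h1.symm
  have hZV : ∀ Z : VF I N, G.g Z (D'.cov (Y j) (Y l)) = 0 := by
    intro Z
    have h0 : gLin G (D'.cov (Y j) (Y l)) = 0 := Module.Basis.ext X fun i => by
      simpa [gLin] using hXV i
    simpa [gLin] using LinearMap.congr_fun h0 Z
  exact G.definite _ (hZV _)
end
end

section
/- Let {X_1,...,X_n} be a global frame on a smooth n-manifold N with associated teleparallel connection ∇, let {θ^1,...,θ^n} be an almost dual basis of one-forms for {X_j}, let G be a Riemannian metric on N, let Y_j be the G-gradient vector field of θ^j, and let ∇* be an affine connection that is G-dual to ∇. Then ∇*_{X_k} Y_l = 0 for all k,l = 1,...,n; that is, the gradient frame {Y_j} defining ∇ is parallel-transported by ∇* along the directions of the original frame. -/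
open scoped Manifold
local notation "∞" => (⊤ : ℕ∞)

noncomputable section

variable {E : Type*} [NormedAddCommGroup E] [NormedSpace ℝ E]
  {H : Type*} [TopologicalSpace H]

/-- The gradient frame `{Y_l}` is parallel-transported by the `G`-dual connection `∇*` of the
teleparallel connection `∇` along the directions of the original frame: `∇*_{X_k} Y_l = 0`. -/
theorem dual_connection_parallel_gradient_frame
    (I : ModelWithCorners ℝ E H) (N : Type*) [TopologicalSpace N] [ChartedSpace H N]
    [IsManifold I ∞ N] [FiniteDimensional ℝ E] (n : ℕ)
    (hdim : Module.finrank ℝ E = n)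
    (X : Module.Basis (Fin n) C^∞⟮I, N; ℝ⟯ (VF I N))
    (D : AffineConnection I N)
    (hD : ∀ j k : Fin n, D.cov (X j) (X k) = 0)
    (θ : Module.Basis (Fin n) C^∞⟮I, N; ℝ⟯ (VF I N →ₗ[C^∞⟮I, N; ℝ⟯] C^∞⟮I, N; ℝ⟯))
    (Cmat : Fin n → Fin n → ℝ)
    (hθ : ∀ j k : Fin n, θ j (X k) = algebraMap ℝ C^∞⟮I, N; ℝ⟯ (Cmat j k))
    (G : RiemannianMetric I N)
    (Y : Fin n → VF I N)
    (hY : ∀ (k : Fin n) (Z : VF I N), θ k Z = G.g (Y k) Z)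
    (D' : AffineConnection I N)
    (hdual : ∀ Z W V : VF I N,
      Z (G.g W V) = G.g (D.cov Z W) V + G.g W (D'.cov Z V)) :
    ∀ k l : Fin n, D'.cov (X k) (Y l) = 0 := by
  intro k l
  set W := D'.cov (X k) (Y l) with hW
  have h0 : ∀ Z : VF I N, G.g 0 Z = 0 := by
    intro Z
    have h := G.add_left 0 0 Z
    rw [add_zero] at h
    exact left_eq_add.mp h
  have hsum : ∀ (s : Finset (Fin n)) (f : Fin n → VF I N),
      G.g (∑ i ∈ s, f i) W = ∑ i ∈ s, G.g (f i) W := by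
    intro s f
    induction s using Finset.induction with
    | empty => simpa using h0 W
    | insert _ _ hx ih =>
      rw [Finset.sum_insert hx, Finset.sum_insert hx, G.add_left, ih]
  have hperp : ∀ j : Fin n, G.g (X j) W = 0 := by
    intro j
    have hdl := hdual (X k) (X j) (Y l)
    have hc : G.g (X j) (Y l) = algebraMap ℝ C^∞⟮I, N; ℝ⟯ (Cmat l j) := by
      rw [G.symm, ← hY, hθ]
    rw [hD k j, h0, hc, Derivation.map_algebraMap, zero_add] at hdl
    exact hdl.symm
  have hWW : G.g W W = 0 := by
    have h1 := hsum Finset.univ (fun i => X.repr W i • X i)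
    rw [X.sum_repr W] at h1
    rw [h1]
    refine Finset.sum_eq_zero fun i _ => ?_
    rw [G.smul_left, hperp, smul_zero]
  exact G.definite W hWW
end
end

section
/- Let ∇ be the teleparallel connection of a global frame {X_1,...,X_n} on a Riemannian n-manifold (N,G), let {θ^j} be an almost dual coframe for {X_j}, let Y_j be the G-gradient vector field of θ^j, and let ∇* be the G-dual connection of ∇. Then ∇*_{X_j} X_k = 0 for all j,k = 1,...,n if and only if ∇_{Y_j} Y_k = 0 for all j,k = 1,...,n. -/
open scoped Manifold
local notation "∞" => (⊤ : ℕ∞)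

noncomputable section

variable {E : Type*} [NormedAddCommGroup E] [NormedSpace ℝ E]
  {H : Type*} [TopologicalSpace H]

section Aux

variable {E : Type*} [NormedAddCommGroup E] [NormedSpace ℝ E]
  {H : Type*} [TopologicalSpace H]
  {I : ModelWithCorners ℝ E H} {N : Type*} [TopologicalSpace N] [ChartedSpace H N]

/-- The covariant derivative as a `C^∞`-linear map in its first argument. -/
def AffineConnection.covL (D : AffineConnection I N) (W : VF I N) :
    VF I N →ₗ[C^∞⟮I, N; ℝ⟯] VF I N where
  toFun Z := D.cov Z W
  map_add' Z Z' := D.add_left Z Z' W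
  map_smul' f Z := D.smul_left f Z W

@[simp] theorem AffineConnection.covL_apply (D : AffineConnection I N) (W Z : VF I N) :
    D.covL W Z = D.cov Z W := rfl

/-- The metric as a `C^∞`-linear map in its second argument. -/
def RiemannianMetric.gR (G : RiemannianMetric I N) (W : VF I N) :
    VF I N →ₗ[C^∞⟮I, N; ℝ⟯] C^∞⟮I, N; ℝ⟯ where
  toFun Z := G.g W Z
  map_add' Z Z' := by
    show G.g W (Z + Z') = G.g W Z + G.g W Z'
    rw [G.symm, G.add_left, G.symm Z W, G.symm Z' W]
  map_smul' f Z := by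
    show G.g W (f • Z) = f • G.g W Z
    rw [G.symm, G.smul_left, G.symm]

@[simp] theorem RiemannianMetric.gR_apply (G : RiemannianMetric I N) (W Z : VF I N) :
    G.gR W Z = G.g W Z := rfl

theorem RiemannianMetric.g_zero_left (G : RiemannianMetric I N) (Z : VF I N) :
    G.g 0 Z = 0 := by
  have h := G.add_left 0 0 Z
  rw [add_zero] at h
  exact add_eq_left.mp h.symm

end Aux

/-- A linear map on a module with basis vanishing on the basis vanishes. -/
theorem aux_vanish {R V M : Type*} [CommRing R] [AddCommGroup V] [Module R V]
    [AddCommGroup M] [Module R M] {n : ℕ} (X : Module.Basis (Fin n) R V)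
    (L : V →ₗ[R] M) (h : ∀ i, L (X i) = 0) (Z : V) : L Z = 0 := by
  have hL : L = 0 := X.ext fun i => by simp [h i]
  simp [hL]

/-- A vector killed by every member of a basis of the dual module is zero. -/
theorem aux_theta {R V : Type*} [CommRing R] [AddCommGroup V] [Module R V] {n : ℕ}
    (X : Module.Basis (Fin n) R V) (θ : Module.Basis (Fin n) R (V →ₗ[R] R)) (W : V)
    (h : ∀ j, θ j W = 0) : W = 0 := by
  have hev : ∀ φ : V →ₗ[R] R, φ W = 0 := by
    intro φ
    have hs : (∑ i, θ.repr φ i • θ i) = φ := θ.sum_repr φ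
    calc φ W = (∑ i, θ.repr φ i • θ i) W := by rw [hs]
      _ = ∑ i, θ.repr φ i • (θ i) W := by
            simp only [LinearMap.sum_apply, LinearMap.smul_apply]
      _ = 0 := by simp [h]
  have h0 : X.repr W = 0 := Finsupp.ext fun i => by
    rw [← X.coord_apply]; exact hev _
  have := congrArg X.repr.symm h0
  simpa using this


set_option maxHeartbeats 1000000 in
/-- For the teleparallel connection `∇` of a frame `{X_j}`, its `G`-dual connection `∇*`, and
the `G`-gradient frame `{Y_j}` of an almost dual coframe `{θ^j}`, one has
`∇*_{X_j} X_k = 0` for all `j, k` iff `∇_{Y_j} Y_k = 0` for all `j, k`. -/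
theorem dual_parallel_iff_parallel
    (I : ModelWithCorners ℝ E H) (N : Type*) [TopologicalSpace N] [ChartedSpace H N]
    [IsManifold I (⊤ : ℕ∞) N] [FiniteDimensional ℝ E] (n : ℕ)
    (hdim : Module.finrank ℝ E = n)
    (X : Module.Basis (Fin n) C^∞⟮I, N; ℝ⟯ (VF I N))
    (D : AffineConnection I N)
    (hD : ∀ j k : Fin n, D.cov (X j) (X k) = 0)
    (θ : Module.Basis (Fin n) C^∞⟮I, N; ℝ⟯ (VF I N →ₗ[C^∞⟮I, N; ℝ⟯] C^∞⟮I, N; ℝ⟯))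
    (Cmat : Fin n → Fin n → ℝ)
    (hθ : ∀ j k : Fin n, θ j (X k) = algebraMap ℝ C^∞⟮I, N; ℝ⟯ (Cmat j k))
    (G : RiemannianMetric I N)
    (Y : Fin n → VF I N)
    (hY : ∀ (k : Fin n) (Z : VF I N), θ k Z = G.g (Y k) Z)
    (D' : AffineConnection I N)
    (hdual : ∀ Z W V : VF I N,
      Z (G.g W V) = G.g (D.cov Z W) V + G.g W (D'.cov Z V)) :
    (∀ j k : Fin n, D'.cov (X j) (X k) = 0) ↔ (∀ j k : Fin n, D.cov (Y j) (Y k) = 0) := by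
    classical
  -- Key identity: G(∇_Z Y_j, X_k) + θ_j(∇*_Z X_k) = 0
  have key : ∀ (Z : VF I N) (j k : Fin n),
      G.g (D.cov Z (Y j)) (X k) + θ j (D'.cov Z (X k)) = 0 := by
    intro Z j k
    have h1 := hdual Z (Y j) (X k)
    rw [← hY j (X k), ← hY j (D'.cov Z (X k)), hθ j k] at h1
    have h0 : Z (algebraMap ℝ C^∞⟮I, N; ℝ⟯ (Cmat j k)) = 0 := by simp
    rw [h0] at h1
    exact h1.symm
  -- Nondegeneracy of G against the frame X
  have gnd : ∀ W : VF I N, (∀ k, G.g W (X k) = 0) → W = 0 := by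
    intro W hW
    have hall : ∀ Z, G.g W Z = 0 := fun Z => aux_vanish X (G.gR W) hW Z
    exact G.definite W (hall W)
  constructor
  · intro h j k
    have h1 : ∀ i m : Fin n, D.cov (X i) (Y m) = 0 := by
      intro i m
      apply gnd
      intro k'
      have hk := key (X i) m k'
      rw [h i k'] at hk
      simpa using hk
    have h2 : ∀ (Z : VF I N) (m : Fin n), D.cov Z (Y m) = 0 := by
      intro Z m
      exact aux_vanish X (D.covL (Y m)) (fun i => h1 i m) Z
    exact h2 (Y j) k
  · intro h j k
    -- Step 1: ∇*_{Y_m} X_k = 0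
    have h1 : ∀ m k' : Fin n, D'.cov (Y m) (X k') = 0 := by
      intro m k'
      apply aux_theta X θ
      intro i
      have hk := key (Y m) i k'
      rw [h m i, G.g_zero_left, zero_add] at hk
      exact hk
    -- Step 2: each X_i is a combination of the Y_m's
    have h3 : ∀ i : Fin n, X i = ∑ m, θ.repr (G.gR (X i)) m • Y m := by
      intro i
      set c := θ.repr (G.gR (X i)) with hc
      have hsum : (∑ m, c m • θ m) = G.gR (X i) := θ.sum_repr _
      have hg : ∀ Z, G.g (X i - ∑ m, c m • Y m) Z = 0 := by
        intro Z
        have e1 : G.g (X i - ∑ m, c m • Y m) Z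
            = G.gR Z (X i) - G.gR Z (∑ m, c m • Y m) := by
          rw [G.symm]
          exact map_sub (G.gR Z) _ _
        have e2 : G.gR Z (∑ m, c m • Y m) = ∑ m, c m • (θ m) Z := by
          rw [map_sum]
          refine Finset.sum_congr rfl fun m _ => ?_
          rw [map_smul]
          congr 1
          show G.g Z (Y m) = θ m Z
          rw [G.symm, ← hY]
        have e3 : (∑ m, c m • (θ m) Z) = G.gR Z (X i) := by
          calc ∑ m, c m • (θ m) Z = (∑ m, c m • θ m) Z := by
                simp [LinearMap.sum_apply, LinearMap.smul_apply]
            _ = G.gR (X i) Z := by rw [hsum]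
            _ = G.g (X i) Z := rfl
            _ = G.g Z (X i) := G.symm _ _
            _ = G.gR Z (X i) := rfl
        rw [e1, e2, e3, sub_self]
      have hd := G.definite _ (hg (X i - ∑ m, c m • Y m))
      exact (sub_eq_zero.mp hd)
    rw [h3 j]
    have : D'.covL (X k) (∑ m, θ.repr (G.gR (X j)) m • Y m) = 0 := by
      rw [map_sum]
      refine Finset.sum_eq_zero fun m _ => ?_
      rw [map_smul, D'.covL_apply, h1 m k, smul_zero]
    rw [← D'.covL_apply]
    exact this
end
end

section
/- Let p ∈ Δ_n and w ∈ ℝ^n, and define the curve p_w : ℝ → ℝ^n by p_w(t)^k := e^{t w^k} p^k / (Σ_{j=1}^n e^{t w^j} p^j). Then p_w(t) ∈ Δ_n for every t ∈ ℝ, p_w(0) = p, and p_w is differentiable with (d/dt) p_w(t)^k = (w^k − Σ_{j=1}^n w^j p_w(t)^j) · p_w(t)^k for all t ∈ ℝ and all k = 1,...,n. In particular, the geodesics of the exponential connection on Δ_n are defined for all times, so the exponential connection is complete. -/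
open scoped BigOperators

/-- The interior of the n-simplex: strictly positive probability vectors. -/
def simplexInterior (n : ℕ) : Set (Fin n → ℝ) :=
  {p | (∀ i, 0 < p i) ∧ ∑ i, p i = 1}

/-- The exponential geodesic `p_w(t)^k = e^{t w^k} p^k / Σ_j e^{t w^j} p^j`. -/
noncomputable def expGeodesic {n : ℕ} (p w : Fin n → ℝ) (t : ℝ) : Fin n → ℝ :=
  fun k => Real.exp (t * w k) * p k / ∑ j, Real.exp (t * w j) * p j

/-- The geodesics of the exponential connection on the interior of the n-simplex stay in the
simplex for all times, start at `p`, and satisfy the gradient-flow ODE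
`(d/dt) p_w(t)^k = (w^k − Σ_j w^j p_w(t)^j) p_w(t)^k`; in particular they are defined for all
times, so the exponential connection is complete. -/
theorem expGeodesic_complete {n : ℕ} (p : Fin n → ℝ) (hp : p ∈ simplexInterior n)
    (w : Fin n → ℝ) :
    (∀ t : ℝ, expGeodesic p w t ∈ simplexInterior n) ∧
    expGeodesic p w 0 = p ∧
    (∀ (t : ℝ) (k : Fin n),
      HasDerivAt (fun s => expGeodesic p w s k)
        ((w k - ∑ j, w j * expGeodesic p w t j) * expGeodesic p w t k) t) := by
  have key : ∀ (a S S' c : ℝ), S ≠ 0 →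
      (c - S' / S) * (a / S) = (c * a * S - a * S') / S ^ 2 := by
    intro a S S' c hSne
    field_simp
  obtain ⟨hpos, hsum⟩ := hp
  have hn : 0 < n := by
    rcases Nat.eq_zero_or_pos n with h | h
    · subst h; simp at hsum
    · exact h
  haveI : Nonempty (Fin n) := ⟨⟨0, hn⟩⟩
  have hS : ∀ t : ℝ, 0 < ∑ j, Real.exp (t * w j) * p j := fun t =>
    Finset.sum_pos (fun j _ => mul_pos (Real.exp_pos _) (hpos j)) Finset.univ_nonempty
  refine ⟨fun t => ⟨fun k => div_pos (mul_pos (Real.exp_pos _) (hpos k)) (hS t), ?_⟩, ?_, ?_⟩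
  · rw [show (∑ i, expGeodesic p w t i) =
        (∑ i, Real.exp (t * w i) * p i) / ∑ j, Real.exp (t * w j) * p j by
      rw [Finset.sum_div]; rfl]
    exact div_self (hS t).ne'
  · funext k
    simp [expGeodesic, hsum]
  · intro t k
    have hN : HasDerivAt (fun s : ℝ => Real.exp (s * w k) * p k)
        (w k * (Real.exp (t * w k) * p k)) t := by
      have h1 : HasDerivAt (fun s : ℝ => s * w k) (w k) t := by
        simpa using (hasDerivAt_id t).mul_const (w k)
      have h2 := h1.exp.mul_const (p k)
      convert h2 using 1
      any_goals rfl
      ring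
    have hS' : HasDerivAt (fun s : ℝ => ∑ j, Real.exp (s * w j) * p j)
        (∑ j, w j * (Real.exp (t * w j) * p j)) t := by
      refine HasDerivAt.fun_sum fun j _ => ?_
      have h1 : HasDerivAt (fun s : ℝ => s * w j) (w j) t := by
        simpa using (hasDerivAt_id t).mul_const (w j)
      have h2 := h1.exp.mul_const (p j)
      convert h2 using 1
      any_goals rfl
      ring
    have hD := hN.div hS' (hS t).ne'
    convert hD using 1
    any_goals rfl
    have hrw : (∑ j, w j * expGeodesic p w t j)
        = (∑ j, w j * (Real.exp (t * w j) * p j)) / ∑ j, Real.exp (t * w j) * p j := by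
      rw [Finset.sum_div]
      refine Finset.sum_congr rfl fun j _ => ?_
      simp [expGeodesic, mul_div_assoc]
    rw [hrw]
    simp only [expGeodesic]
    rw [key (Real.exp (t * w k) * p k) _ _ (w k) (hS t).ne']
end

section
/- Let H and V be n×n complex Hermitian matrices. For every t ∈ ℝ, Tr(exp(H + tV)) is a positive real number and the matrix ρ(t) := exp(H + tV) / Tr(exp(H + tV)) is Hermitian, positive definite, and has trace 1. In particular, the curve t ↦ ρ(t) lies in the set of faithful density matrices for all t ∈ ℝ, so the geodesics of the quantum exponential connection (the connection dual to the mixture connection with respect to the Bogoliubov–Kubo–Mori metric) are complete. -/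
open scoped ComplexOrder
open Matrix

lemma isHermitian_smul_real {n : ℕ} (c : ℝ) {M : Matrix (Fin n) (Fin n) ℂ}
    (hM : M.IsHermitian) : ((c : ℂ) • M).IsHermitian := by
  unfold Matrix.IsHermitian
  rw [Matrix.conjTranspose_smul, hM]
  norm_num

lemma posDef_exp_of_isHermitian {n : ℕ} {A : Matrix (Fin n) (Fin n) ℂ}
    (hA : A.IsHermitian) : (NormedSpace.exp A).PosDef := by
  set B := NormedSpace.exp ((1/2 : ℂ) • A) with hB
  have hherm : ((1/2 : ℂ) • A).IsHermitian := by
    simpa using isHermitian_smul_real (1/2 : ℝ) hA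
  have h2 : NormedSpace.exp A = Bᴴ * B := by
    rw [hB, Matrix.IsHermitian.exp hherm,
      ← Matrix.exp_add_of_commute _ _ (Commute.refl _), ← add_smul]
    norm_num
  have hps : (NormedSpace.exp A).PosSemidef := by
    rw [h2]; exact Matrix.posSemidef_conjTranspose_mul_self _
  have hinj : Function.Injective (B.mulVec) :=
    Matrix.mulVec_injective_iff_isUnit.mpr (Matrix.isUnit_exp _)
  refine Matrix.PosDef.of_dotProduct_mulVec_pos hps.1 (fun x hx => ?_)
  have hBx : B *ᵥ x ≠ 0 := fun h => hx (hinj (by simpa using h))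
  rw [h2, ← Matrix.mulVec_mulVec, Matrix.dotProduct_mulVec, ← Matrix.star_mulVec]
  exact Matrix.dotProduct_star_self_pos_iff.mpr hBx

lemma posDef_trace_pos {n : ℕ} (hn : 1 ≤ n) {M : Matrix (Fin n) (Fin n) ℂ}
    (hM : M.PosDef) : 0 < M.trace := by
  have : ∀ i : Fin n, 0 < M i i := fun i => by
    have hx : (Pi.single i 1 : Fin n → ℂ) ≠ 0 := by
      intro h
      simpa using congr_fun h i
    have := hM.dotProduct_mulVec_pos hx
    simpa [dotProduct, Matrix.mulVec, Pi.single_apply] using this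
  have hne : (Finset.univ : Finset (Fin n)).Nonempty := by
    exact Finset.univ_nonempty_iff.mpr ⟨⟨0, hn⟩⟩
  exact Finset.sum_pos (fun i _ => this i) hne

/-- For Hermitian matrices `H` and `V`, `Tr(exp(H + tV))` is a positive real number and
`ρ(t) = exp(H + tV) / Tr(exp(H + tV))` is a faithful density matrix (Hermitian, positive
definite, of trace one) for every `t ∈ ℝ`: the geodesics of the quantum exponential
connection are complete. -/
theorem bkm_exponential_geodesic_complete {n : ℕ} (hn : 1 ≤ n)
    (Hm V : Matrix (Fin n) (Fin n) ℂ) (hH : Hm.IsHermitian) (hV : V.IsHermitian) (t : ℝ) :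
    0 < (NormedSpace.exp (Hm + (t : ℂ) • V)).trace ∧
    ((NormedSpace.exp (Hm + (t : ℂ) • V)).trace⁻¹ •
        NormedSpace.exp (Hm + (t : ℂ) • V)).IsHermitian ∧
    ((NormedSpace.exp (Hm + (t : ℂ) • V)).trace⁻¹ •
        NormedSpace.exp (Hm + (t : ℂ) • V)).PosDef ∧
    ((NormedSpace.exp (Hm + (t : ℂ) • V)).trace⁻¹ •
        NormedSpace.exp (Hm + (t : ℂ) • V)).trace = 1 := by
  have hA : (Hm + (t : ℂ) • V).IsHermitian := hH.add (isHermitian_smul_real t hV)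
  have hpd := posDef_exp_of_isHermitian hA
  have htr := posDef_trace_pos hn hpd
  set c := (NormedSpace.exp (Hm + (t : ℂ) • V)).trace with hc
  have hcr := Complex.pos_iff.mp htr
  have hc0 : c ≠ 0 := ne_of_gt htr
  have hcre : c = (c.re : ℂ) := Complex.ext rfl (by simp [← hcr.2])
  have hconj : (starRingEnd ℂ) c = c := Complex.conj_eq_iff_im.mpr hcr.2.symm
  have hstar : star c⁻¹ = c⁻¹ := by
    calc star c⁻¹ = (starRingEnd ℂ) c⁻¹ := rfl
      _ = ((starRingEnd ℂ) c)⁻¹ := map_inv₀ _ _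
      _ = c⁻¹ := by rw [hconj]
  have hcinv : 0 < c⁻¹ := by
    rw [hcre, ← Complex.ofReal_inv]
    exact_mod_cast Complex.zero_lt_real.mpr (inv_pos.mpr hcr.1)
  refine ⟨htr, ?_, ?_, ?_⟩
  · unfold Matrix.IsHermitian
    rw [Matrix.conjTranspose_smul, hpd.1, hstar]
  · refine Matrix.PosDef.of_dotProduct_mulVec_pos ?_ (fun x hx => ?_)
    · unfold Matrix.IsHermitian
      rw [Matrix.conjTranspose_smul, hpd.1, hstar]
    · have h1 := hpd.dotProduct_mulVec_pos hx
      rw [Matrix.smul_mulVec, dotProduct_smul]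
      calc (0:ℂ) = c⁻¹ * 0 := by ring
        _ < c⁻¹ * (star x ⬝ᵥ NormedSpace.exp (Hm + (t:ℂ) • V) *ᵥ x) := by
            exact mul_lt_mul_of_pos_left h1 hcinv
        _ = c⁻¹ • (star x ⬝ᵥ NormedSpace.exp (Hm + (t:ℂ) • V) *ᵥ x) := by
            simp [smul_eq_mul]
  · rw [Matrix.trace_smul, ← hc, smul_eq_mul, inv_mul_cancel₀ hc0]
end

section
/- Let ρ be an n×n complex Hermitian positive-definite matrix with Tr(ρ) = 1, let V be an n×n Hermitian matrix, and let κ > 0. For every t ∈ ℝ, the matrix exp(tV) ρ^{√κ} exp(tV) is Hermitian positive definite, hence its real power A(t) := (exp(tV) ρ^{√κ} exp(tV))^{1/√κ} is Hermitian positive definite with Tr(A(t)) > 0, and ρ(t) := A(t) / Tr(A(t)) is a faithful density matrix for every t ∈ ℝ. In particular the geodesics of the deformed-Bures dual connection are defined for all times, so this connection is complete. -/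
open scoped ComplexOrder
open Matrix

/-- The real power `A^r` of a Hermitian matrix, defined through the spectral decomposition by
raising each eigenvalue to the power `r` (junk value `A` if `A` is not Hermitian). -/
noncomputable def hermPow {n : ℕ} (A : Matrix (Fin n) (Fin n) ℂ) (r : ℝ) :
    Matrix (Fin n) (Fin n) ℂ :=
  if hA : A.IsHermitian then
    (hA.eigenvectorUnitary : Matrix (Fin n) (Fin n) ℂ) *
      Matrix.diagonal (fun i => ((hA.eigenvalues i ^ r : ℝ) : ℂ)) *
      (star (hA.eigenvectorUnitary : Matrix (Fin n) (Fin n) ℂ))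
  else A

lemma posDef_conj' {n : ℕ} {A B : Matrix (Fin n) (Fin n) ℂ} (hA : A.PosDef) (hB : IsUnit B) :
    (Bᴴ * A * B).PosDef := by
  refine Matrix.PosDef.of_dotProduct_mulVec_pos (Matrix.isHermitian_conjTranspose_mul_mul B hA.1) fun x hx => ?_
  have hBx : B *ᵥ x ≠ 0 := by
    intro h
    apply hx
    have h2 := congrArg (fun v => B⁻¹ *ᵥ v) h
    simpa [Matrix.mulVec_mulVec,
      Matrix.nonsing_inv_mul B ((Matrix.isUnit_iff_isUnit_det B).mp hB)] using h2
  simpa only [Matrix.star_mulVec, Matrix.dotProduct_mulVec, Matrix.vecMul_vecMul] using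
    hA.dotProduct_mulVec_pos hBx

lemma posDef_conj {n : ℕ} {A B : Matrix (Fin n) (Fin n) ℂ} (hA : A.PosDef) (hB : IsUnit B) :
    (B * A * Bᴴ).PosDef := by
  have hBH : IsUnit Bᴴ := by
    rw [Matrix.isUnit_iff_isUnit_det, Matrix.det_conjTranspose]
    exact ((Matrix.isUnit_iff_isUnit_det B).mp hB).star
  simpa only [Matrix.conjTranspose_conjTranspose] using posDef_conj' hA hBH

lemma hermPow_posDef {n : ℕ} {A : Matrix (Fin n) (Fin n) ℂ} (hA : A.PosDef) (r : ℝ) :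
    (hermPow A r).PosDef := by
  rw [hermPow, dif_pos hA.1]
  have hd : (Matrix.diagonal fun i => ((hA.1.eigenvalues i ^ r : ℝ) : ℂ)).PosDef := by
    rw [Matrix.posDef_diagonal_iff]
    intro i
    have h1 : (0 : ℝ) < hA.1.eigenvalues i ^ r :=
      Real.rpow_pos_of_pos (hA.eigenvalues_pos i) r
    exact_mod_cast h1
  have hU : IsUnit ((hA.1.eigenvectorUnitary : Matrix (Fin n) (Fin n) ℂ)) :=
    (Unitary.toUnits hA.1.eigenvectorUnitary).isUnit
  rw [Matrix.star_eq_conjTranspose]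
  exact posDef_conj hd hU

lemma posDef_trace_pos_s16 {n : ℕ} (hn : 1 ≤ n) {A : Matrix (Fin n) (Fin n) ℂ} (hA : A.PosDef) :
    0 < A.trace := by
  have hdiag : ∀ i, 0 < A i i := by
    intro i
    have h := hA.dotProduct_mulVec_pos (x := Pi.single i 1) (fun h => one_ne_zero (α := ℂ) (by simpa using congrFun h i))
    simpa [dotProduct, Matrix.mulVec, Pi.single_apply] using h
  have : Nonempty (Fin n) := ⟨⟨0, hn⟩⟩
  exact Finset.sum_pos (fun i _ => hdiag i) Finset.univ_nonempty

lemma posDef_smul {n : ℕ} {A : Matrix (Fin n) (Fin n) ℂ} (hA : A.PosDef) {r : ℝ} (hr : 0 < r) :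
    ((r : ℂ) • A).PosDef := by
  refine Matrix.PosDef.of_dotProduct_mulVec_pos ?_ fun x hx => ?_
  · rw [Matrix.IsHermitian, Matrix.conjTranspose_smul, hA.1.eq]
    congr 1
    simp
  · have h1 : (0 : ℂ) < (r : ℂ) := by exact_mod_cast hr
    have h2 := hA.dotProduct_mulVec_pos hx
    calc (0 : ℂ) < (r : ℂ) * (dotProduct (star x) (A *ᵥ x)) := mul_pos h1 h2
    _ = dotProduct (star x) (((r : ℂ) • A) *ᵥ x) := by
        rw [Matrix.smul_mulVec, dotProduct_smul, smul_eq_mul]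

/-- For a faithful density matrix `ρ`, a Hermitian `V` and `κ > 0`, the matrix
`exp(tV) ρ^{√κ} exp(tV)` is Hermitian positive definite, its real power
`A(t) = (exp(tV) ρ^{√κ} exp(tV))^{1/√κ}` is Hermitian positive definite with positive trace,
and `ρ(t) = A(t)/Tr(A(t))` is a faithful density matrix for every `t ∈ ℝ`: the geodesics of
the deformed-Bures dual connection are complete. -/
theorem deformed_bures_geodesic_complete {n : ℕ} (hn : 1 ≤ n)
    (ρ : Matrix (Fin n) (Fin n) ℂ) (hρ : ρ.PosDef) (hρtr : ρ.trace = 1)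
    (V : Matrix (Fin n) (Fin n) ℂ) (hV : V.IsHermitian) (κ : ℝ) (hκ : 0 < κ) (t : ℝ) :
    (NormedSpace.exp ((t : ℂ) • V) * hermPow ρ (Real.sqrt κ) *
        NormedSpace.exp ((t : ℂ) • V)).IsHermitian ∧
    (NormedSpace.exp ((t : ℂ) • V) * hermPow ρ (Real.sqrt κ) *
        NormedSpace.exp ((t : ℂ) • V)).PosDef ∧
    (hermPow (NormedSpace.exp ((t : ℂ) • V) * hermPow ρ (Real.sqrt κ) *
        NormedSpace.exp ((t : ℂ) • V)) (1 / Real.sqrt κ)).IsHermitian ∧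
    (hermPow (NormedSpace.exp ((t : ℂ) • V) * hermPow ρ (Real.sqrt κ) *
        NormedSpace.exp ((t : ℂ) • V)) (1 / Real.sqrt κ)).PosDef ∧
    0 < (hermPow (NormedSpace.exp ((t : ℂ) • V) * hermPow ρ (Real.sqrt κ) *
        NormedSpace.exp ((t : ℂ) • V)) (1 / Real.sqrt κ)).trace ∧
    ((hermPow (NormedSpace.exp ((t : ℂ) • V) * hermPow ρ (Real.sqrt κ) *
        NormedSpace.exp ((t : ℂ) • V)) (1 / Real.sqrt κ)).trace⁻¹ •
      hermPow (NormedSpace.exp ((t : ℂ) • V) * hermPow ρ (Real.sqrt κ) *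
        NormedSpace.exp ((t : ℂ) • V)) (1 / Real.sqrt κ)).PosDef ∧
    ((hermPow (NormedSpace.exp ((t : ℂ) • V) * hermPow ρ (Real.sqrt κ) *
        NormedSpace.exp ((t : ℂ) • V)) (1 / Real.sqrt κ)).trace⁻¹ •
      hermPow (NormedSpace.exp ((t : ℂ) • V) * hermPow ρ (Real.sqrt κ) *
        NormedSpace.exp ((t : ℂ) • V)) (1 / Real.sqrt κ)).trace = 1 := by
  set E := NormedSpace.exp ((t : ℂ) • V) with hE
  have htV : ((t : ℂ) • V).IsHermitian := by
    rw [Matrix.IsHermitian, Matrix.conjTranspose_smul, hV.eq]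
    congr 1
    simp
  have hEherm : E.IsHermitian := htV.exp
  have hEunit : IsUnit E := Matrix.isUnit_exp _
  have hP : (hermPow ρ (Real.sqrt κ)).PosDef := hermPow_posDef hρ _
  have hBpos : (E * hermPow ρ (Real.sqrt κ) * E).PosDef := by
    have := posDef_conj hP hEunit
    rwa [hEherm.eq] at this
  have hApos : (hermPow (E * hermPow ρ (Real.sqrt κ) * E) (1 / Real.sqrt κ)).PosDef :=
    hermPow_posDef hBpos _
  have htr : 0 < (hermPow (E * hermPow ρ (Real.sqrt κ) * E) (1 / Real.sqrt κ)).trace :=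
    posDef_trace_pos_s16 hn hApos
  set c := (hermPow (E * hermPow ρ (Real.sqrt κ) * E) (1 / Real.sqrt κ)).trace with hc
  have him : c.im = 0 := by
    rw [Complex.lt_def] at htr
    simpa using htr.2.symm
  have hcre : c = ((c.re : ℝ) : ℂ) := by
    apply Complex.ext <;> simp [him]
  have hcrepos : 0 < c.re := by
    rw [Complex.lt_def] at htr
    simpa using htr.1
  have hsmulpos : (c⁻¹ • hermPow (E * hermPow ρ (Real.sqrt κ) * E) (1 / Real.sqrt κ)).PosDef := by
    have h1 : c⁻¹ = (((c.re)⁻¹ : ℝ) : ℂ) := by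
      rw [Complex.ofReal_inv, ← hcre]
    rw [h1]
    exact posDef_smul hApos (inv_pos.mpr hcrepos)
  refine ⟨hBpos.1, hBpos, hApos.1, hApos, htr, hsmulpos, ?_⟩
  rw [Matrix.trace_smul, ← hc, smul_eq_mul, inv_mul_cancel₀ (ne_of_gt htr)]
end

section
/- Let p_1,...,p_n > 0 with Σ_j p_j = 1 and let ρ = diag(p_1,...,p_n). Let f : (0,∞) → (0,∞) satisfy f(1) = 1 and f(x) = x f(1/x) for all x > 0. Define the linear maps K^f_ρ and T^f_ρ on n×n complex matrices by (K^f_ρ(A))_{jk} := p_k f(p_j/p_k) A_{jk} and (T^f_ρ(A))_{jk} := A_{jk} / (p_k f(p_j/p_k)). Let ω be an n×n Hermitian matrix with Tr(ω) = 0, and set Y := K^f_ρ(ω) − Tr(K^f_ρ(ω)) · ρ. Then Y is Hermitian, Tr(Y) = 0, and for every Hermitian matrix a with Tr(a) = 0 one has Tr(a · T^f_ρ(Y)) = Tr(a ω). That is, Y is the G_f-gradient at ρ of the expectation-value function ρ ↦ Tr(ρ ω). -/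
open scoped BigOperators

/-- At a diagonal state `ρ = diag(p)`, for a traceless Hermitian `ω`, the matrix
`Y = K^f_ρ(ω) − Tr(K^f_ρ(ω)) ρ` is traceless Hermitian and satisfies
`Tr(a ⬝ T^f_ρ(Y)) = Tr(a ω)` for every traceless Hermitian `a`: `Y` is the `G_f`-gradient at
`ρ` of the expectation-value function `ρ ↦ Tr(ρ ω)`. -/
theorem gf_gradient_of_expectation_function {n : ℕ}
    (p : Fin n → ℝ) (hp : ∀ j, 0 < p j) (hpsum : ∑ j, p j = 1)
    (f : ℝ → ℝ) (hfpos : ∀ x : ℝ, 0 < x → 0 < f x) (hf1 : f 1 = 1)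
    (hfsymm : ∀ x : ℝ, 0 < x → f x = x * f x⁻¹)
    (Kf Tf : Matrix (Fin n) (Fin n) ℂ → Matrix (Fin n) (Fin n) ℂ)
    (hKf : ∀ (A : Matrix (Fin n) (Fin n) ℂ) (j k : Fin n),
      Kf A j k = ((p k * f (p j / p k) : ℝ) : ℂ) * A j k)
    (hTf : ∀ (A : Matrix (Fin n) (Fin n) ℂ) (j k : Fin n),
      Tf A j k = A j k / ((p k * f (p j / p k) : ℝ) : ℂ))
    (ω : Matrix (Fin n) (Fin n) ℂ) (hω : ω.IsHermitian) (hωtr : ω.trace = 0)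
    (Y : Matrix (Fin n) (Fin n) ℂ)
    (hYdef : Y = Kf ω - (Kf ω).trace • Matrix.diagonal (fun j => (p j : ℂ))) :
    Y.IsHermitian ∧ Y.trace = 0 ∧
    (∀ a : Matrix (Fin n) (Fin n) ℂ, a.IsHermitian → a.trace = 0 →
      (a * Tf Y).trace = (a * ω).trace) := by
  -- symmetry of the kernel coefficients
  have hpne : ∀ j, p j ≠ 0 := fun j => (hp j).ne'
  have hcsymm : ∀ j k, p k * f (p j / p k) = p j * f (p k / p j) := by
    intro j k
    have hx : 0 < p j / p k := div_pos (hp j) (hp k)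
    have h := hfsymm _ hx
    rw [inv_div] at h
    rw [h, show p k * (p j / p k * f (p k / p j)) = (p k / p k) * (p j * f (p k / p j)) by ring,
      div_self (hpne k), one_mul]
  have hcdiag : ∀ j, p j * f (p j / p j) = p j := by
    intro j
    rw [div_self (hpne j), hf1, mul_one]
  -- ω has real diagonal entries
  have hωdiag : ∀ j, (starRingEnd ℂ) (ω j j) = ω j j := by
    intro j
    have := congrFun (congrFun hω j) j
    simpa [Matrix.conjTranspose_apply] using this
  -- the trace of Kf ω
  set t : ℂ := (Kf ω).trace with ht
  have htval : t = ∑ j, ((p j : ℂ)) * ω j j := by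
    rw [ht, Matrix.trace]
    apply Finset.sum_congr rfl
    intro j _
    rw [Matrix.diag_apply, hKf, hcdiag]
  have htreal : (starRingEnd ℂ) t = t := by
    rw [htval, map_sum]
    apply Finset.sum_congr rfl
    intro j _
    rw [map_mul, hωdiag, Complex.conj_ofReal]
  -- Y entries
  have hY : ∀ j k, Y j k = ((p k * f (p j / p k) : ℝ) : ℂ) * ω j k
      - t * (if j = k then (p j : ℂ) else 0) := by
    intro j k
    rw [hYdef]
    simp [Matrix.sub_apply, Matrix.smul_apply, hKf, Matrix.diagonal_apply, ht]
  have hYherm : Y.IsHermitian := by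
    ext j k
    rw [Matrix.conjTranspose_apply, hY k j, hY j k]
    have hωjk : (starRingEnd ℂ) (ω k j) = ω j k := by
      have := congrFun (congrFun hω j) k
      simpa [Matrix.conjTranspose_apply] using this
    simp only [star_sub, star_mul', RCLike.star_def, Complex.conj_ofReal, hωjk, map_mul, htreal]
    congr 2
    · rw [hcsymm j k]
    · by_cases h : j = k
      · subst h; simp [Complex.conj_ofReal]
      · simp [h, Ne.symm h]
  refine ⟨hYherm, ?_, ?_⟩
  · -- trace zero
    have : Y.trace = t - t * ∑ j, (p j : ℂ) := by
      rw [Matrix.trace]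
      rw [show ∑ j, Y.diag j = ∑ j, (((p j * f (p j / p j) : ℝ) : ℂ) * ω j j - t * (p j : ℂ)) by
        apply Finset.sum_congr rfl; intro j _; rw [Matrix.diag_apply, hY]; simp]
      rw [Finset.sum_sub_distrib, ← Finset.mul_sum]
      congr 1
      rw [htval]
      apply Finset.sum_congr rfl
      intro j _
      rw [hcdiag]
    rw [this]
    have : (∑ j, (p j : ℂ)) = 1 := by
      rw [← Complex.ofReal_sum, hpsum, Complex.ofReal_one]
    rw [this, mul_one, sub_self]
  · -- Tf Y = ω - t • 1
    intro a ha hatr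
    have hcne : ∀ j k, ((p k * f (p j / p k) : ℝ) : ℂ) ≠ 0 := by
      intro j k
      exact_mod_cast (mul_pos (hp k) (hfpos _ (div_pos (hp j) (hp k)))).ne'
    have hTfY : Tf Y = ω - t • (1 : Matrix (Fin n) (Fin n) ℂ) := by
      ext j k
      rw [hTf, hY]
      by_cases h : j = k
      · subst h
        rw [if_pos rfl]
        have : ((p j * f (p j / p j) : ℝ) : ℂ) = (p j : ℂ) := by
          rw [hcdiag]
        rw [this]
        field_simp [hpne j]
        simp [Matrix.sub_apply, Matrix.smul_apply, Matrix.one_apply_eq]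
      · rw [if_neg h, mul_zero, sub_zero, Matrix.sub_apply, Matrix.smul_apply,
          Matrix.one_apply_ne h, smul_zero, sub_zero, mul_comm, mul_div_assoc,
          div_self (hcne j k), mul_one]
    rw [hTfY, Matrix.mul_sub, Matrix.trace_sub, Matrix.mul_smul, Matrix.mul_one,
      Matrix.trace_smul, hatr, smul_zero, sub_zero]
end
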